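/- Fix n ≥ 1 and let a : ℕ → ℝ satisfy 0 < a(k) ≤ c for all k, where c < 1 is a fixed constant. Let X(0) ∈ ℝ^{2n} be arbitrary and let X_T ∈ ℝ^{2n} satisfy [X_T]_H positive definite. Then there exists a finite natural number K such that the vector X_T − D_K · X(0) lies in V_{++}^{2n}, where D_K is the 2n×2n diagonal matrix with j-th diagonal entry Π_{k=0}^{K−1} a(k)^j. (This is the key step establishing controllability of the moment system: applying zero control for K steps and then a final control input whose moment vector is X_T − D_K X(0) steers X(0) to X_T.) -/

import Mathlib

open Matrix in
lemma posDef_coercive {m : ℕ} {M : Matrix (Fin (m+1)) (Fin (m+1)) ℝ} (hM : M.PosDef) :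
    ∃ ε > 0, ∀ x : Fin (m+1) → ℝ, ε * ∑ i, x i ^ 2 ≤ x ⬝ᵥ M *ᵥ x := by
  have hf : Continuous (fun x : EuclideanSpace ℝ (Fin (m+1)) =>
      (x : Fin (m+1) → ℝ) ⬝ᵥ M *ᵥ x) := by
    unfold dotProduct Matrix.mulVec
    change Continuous fun x : EuclideanSpace ℝ (Fin (m+1)) => ∑ i, x i * ∑ j, M i j * x j
    have : ∀ i : Fin (m+1), Continuous fun x : EuclideanSpace ℝ (Fin (m+1)) => x i := fun i =>
      (EuclideanSpace.proj i).continuous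
    continuity
  have hx₀ : (EuclideanSpace.single (0 : Fin (m+1)) (1:ℝ)) ∈
      Metric.sphere (0 : EuclideanSpace ℝ (Fin (m+1))) 1 := by
    simp [EuclideanSpace.norm_single]
  obtain ⟨z, hz, hzmin⟩ := (isCompact_sphere (0 : EuclideanSpace ℝ (Fin (m+1))) 1).exists_isMinOn
    ⟨_, hx₀⟩ hf.continuousOn
  have hz1 : ‖z‖ = 1 := mem_sphere_zero_iff_norm.mp hz
  have hzne : (z : Fin (m+1) → ℝ) ≠ 0 := by
    intro h
    have : z = (0 : EuclideanSpace ℝ (Fin (m+1))) := by simpa using congrArg (WithLp.toLp 2) h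
    simp [this] at hz1
  set ε := (z : Fin (m+1) → ℝ) ⬝ᵥ M *ᵥ z with hε
  have hεpos : 0 < ε := by
    have := hM.dotProduct_mulVec_pos hzne
    simpa using this
  refine ⟨ε, hεpos, fun x => ?_⟩
  by_cases hx : x = 0
  · simp [hx]
  · set X : EuclideanSpace ℝ (Fin (m+1)) := WithLp.toLp 2 x with hX
    have hxE : X ≠ 0 := fun h => hx (by simpa [hX] using congrArg WithLp.ofLp h)
    have hnx : (0:ℝ) < ‖X‖ := norm_pos_iff.mpr hxE
    set y : EuclideanSpace ℝ (Fin (m+1)) :=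
      ‖X‖⁻¹ • X with hy
    have hymem : y ∈ Metric.sphere (0 : EuclideanSpace ℝ (Fin (m+1))) 1 := by
      rw [mem_sphere_zero_iff_norm, hy, norm_smul]
      simp [Real.norm_eq_abs, abs_of_pos (inv_pos.mpr hnx), inv_mul_cancel₀ hnx.ne']
    have hymin : ε ≤ (y : Fin (m+1) → ℝ) ⬝ᵥ M *ᵥ y := hzmin hymem
    have hsq : ‖X‖ ^ 2 = ∑ i, x i ^ 2 := by
      have h1 : ‖X‖ = Real.sqrt (∑ i, ‖X i‖^2) := EuclideanSpace.norm_eq X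
      rw [h1, Real.sq_sqrt (by positivity)]
      simp [sq_abs, hX]
    have hyx : (y : Fin (m+1) → ℝ) ⬝ᵥ M *ᵥ y
        = ‖X‖⁻¹ *
          (‖X‖⁻¹ * (x ⬝ᵥ M *ᵥ x)) := by
      have : (y : Fin (m+1) → ℝ) = ‖X‖⁻¹ • x := by simp [hy, hX]
      rw [this, smul_dotProduct, Matrix.mulVec_smul, dotProduct_smul]
      simp [smul_eq_mul]
    have hle := mul_le_mul_of_nonneg_left hymin
      (by positivity : (0:ℝ) ≤ ‖X‖^2)
    calc ε * ∑ i, x i ^ 2 = ‖X‖^2 * ε := by rw [hsq]; ring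
      _ ≤ ‖X‖^2 * ((y : Fin (m+1) → ℝ) ⬝ᵥ M *ᵥ y) := hle
      _ = x ⬝ᵥ M *ᵥ x := by rw [hyx]; field_simp


/-- The Hankel matrix of a truncated moment vector `X = (σ_1, …, σ_{2n})`, with the
convention `σ_0 = 1`: the `(n+1) × (n+1)` matrix whose `(i, j)` entry is `σ_{i+j}`. -/
def hankel (n : ℕ) (X : Fin (2 * n) → ℝ) : Matrix (Fin (n + 1)) (Fin (n + 1)) ℝ :=
  fun i j =>
    if h : (i : ℕ) + (j : ℕ) = 0 then 1
    else X ⟨(i : ℕ) + (j : ℕ) - 1, by have := i.isLt; have := j.isLt; omega⟩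

/-- Controllability key step: for a stable system (`0 < a k ≤ c < 1`), given any initial
moment vector `X0` and any terminal moment vector `XT` with positive definite Hankel
matrix, after finitely many uncontrolled steps the difference `XT - D_K X0` has a
positive definite Hankel matrix, where `D_K` is the diagonal matrix with entries
`∏_{k<K} a(k)^j`. -/
lemma hankel_symm (n : ℕ) (X : Fin (2*n) → ℝ) (i j : Fin (n+1)) :
    hankel n X i j = hankel n X j i := by
  unfold hankel
  rcases Nat.eq_zero_or_pos ((i:ℕ)+(j:ℕ)) with h|h
  · rw [dif_pos h, dif_pos (by omega)]
  · rw [dif_neg (by omega), dif_neg (by omega)]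
    congr 1
    exact Fin.ext (by simp [Nat.add_comm])

theorem exists_steps_diff_posDef (n : ℕ) (hn : 1 ≤ n)
    (a : ℕ → ℝ) (c : ℝ) (hc : c < 1)
    (ha_pos : ∀ k, 0 < a k) (ha_le : ∀ k, a k ≤ c)
    (X0 XT : Fin (2 * n) → ℝ) (hXT : (hankel n XT).PosDef) :
    ∃ K : ℕ,
      (hankel n (fun i =>
        XT i - (∏ k ∈ Finset.range K, (a k) ^ ((i : ℕ) + 1)) * X0 i)).PosDef := by
  obtain ⟨ε, hεpos, hco⟩ := posDef_coercive hXT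
  have hc0 : (0:ℝ) < c := lt_of_lt_of_le (ha_pos 0) (ha_le 0)
  set B : ℝ := (∑ i, |X0 i|) + 1 with hB
  have hBpos : 0 < B := by
    have : (0:ℝ) ≤ ∑ i, |X0 i| := Finset.sum_nonneg fun i _ => abs_nonneg _
    linarith
  have hX0B : ∀ v, |X0 v| ≤ B := by
    intro v
    have := Finset.single_le_sum (f := fun i => |X0 i|)
      (fun i _ => abs_nonneg _) (Finset.mem_univ v)
    linarith
  obtain ⟨K, hK⟩ := exists_pow_lt_of_lt_one
    (div_pos hεpos (by positivity : (0:ℝ) < (n+1) * B)) hc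
  have hCK : c ^ K * B * (n+1) < ε := by
    rw [lt_div_iff₀ (by positivity : (0:ℝ) < ((n:ℝ)+1) * B)] at hK
    calc c ^ K * B * ((n:ℝ)+1) = c ^ K * (((n:ℝ)+1) * B) := by ring
      _ < ε := hK
  refine ⟨K, Matrix.PosDef.of_dotProduct_mulVec_pos ?_ ?_⟩
  · -- Hermitian
    ext i j
    rw [Matrix.conjTranspose_apply, star_trivial]
    exact hankel_symm n _ j i
  · intro x hx
    rw [show star x = x from star_trivial x]
    have hPnn : ∀ m : ℕ, (0:ℝ) ≤ ∏ k ∈ Finset.range K, a k ^ m :=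
      fun m => Finset.prod_nonneg fun k _ => pow_nonneg (ha_pos k).le m
    have hPle : ∀ m : ℕ, 1 ≤ m → ∏ k ∈ Finset.range K, a k ^ m ≤ c ^ K := by
      intro m hm
      have hple : ∏ k ∈ Finset.range K, a k ≤ c ^ K := by
        calc ∏ k ∈ Finset.range K, a k ≤ ∏ k ∈ Finset.range K, c :=
              Finset.prod_le_prod (fun k _ => (ha_pos k).le) (fun k _ => ha_le k)
          _ = c ^ K := by simp
      have hp0 : (0:ℝ) ≤ ∏ k ∈ Finset.range K, a k :=
        Finset.prod_nonneg fun k _ => (ha_pos k).le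
      have hp1 : ∏ k ∈ Finset.range K, a k ≤ 1 :=
        hple.trans (pow_le_one₀ hc0.le hc.le)
      calc ∏ k ∈ Finset.range K, a k ^ m = (∏ k ∈ Finset.range K, a k) ^ m :=
            Finset.prod_pow _ _ _
        _ ≤ ∏ k ∈ Finset.range K, a k := pow_le_of_le_one hp0 hp1 (by omega)
        _ ≤ c ^ K := hple
    have hentry : ∀ i j : Fin (n+1),
        |hankel n XT i j - hankel n (fun i =>
          XT i - (∏ k ∈ Finset.range K, (a k) ^ ((i : ℕ) + 1)) * X0 i) i j| ≤ c ^ K * B := by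
      intro i j
      unfold hankel
      by_cases h : (i:ℕ)+(j:ℕ) = 0
      · rw [dif_pos h, dif_pos h]
        simp
        positivity
      · rw [dif_neg h, dif_neg h]
        simp only [sub_sub_cancel, abs_mul]
        refine mul_le_mul ?_ (hX0B _) (abs_nonneg _) (by positivity)
        rw [abs_of_nonneg (hPnn _)]
        exact hPle _ (Nat.succ_le_succ (Nat.zero_le _))
    have hquad : dotProduct x ((hankel n (fun i =>
          XT i - (∏ k ∈ Finset.range K, (a k) ^ ((i : ℕ) + 1)) * X0 i)).mulVec x)
        = dotProduct x ((hankel n XT).mulVec x) - ∑ i, ∑ j, (hankel n XT i j - hankel n (fun i =>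
          XT i - (∏ k ∈ Finset.range K, (a k) ^ ((i : ℕ) + 1)) * X0 i) i j) * (x i * x j) := by
      simp only [dotProduct, Matrix.mulVec]
      rw [← Finset.sum_sub_distrib]
      refine Finset.sum_congr rfl fun i _ => ?_
      rw [Finset.mul_sum, Finset.mul_sum, ← Finset.sum_sub_distrib]
      refine Finset.sum_congr rfl fun j _ => ?_
      ring
    obtain ⟨i0, hi0⟩ := Function.ne_iff.mp hx
    have hS : 0 < ∑ i, x i ^ 2 :=
      Finset.sum_pos' (fun i _ => sq_nonneg _)
      ⟨i0, Finset.mem_univ _, pow_two_pos_of_ne_zero (by simpa using hi0)⟩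
    have herr : |∑ i, ∑ j, (hankel n XT i j - hankel n (fun i =>
          XT i - (∏ k ∈ Finset.range K, (a k) ^ ((i : ℕ) + 1)) * X0 i) i j) * (x i * x j)|
        ≤ (c^K*B) * (((n:ℝ)+1) * ∑ i, x i ^ 2) := by
      calc |∑ i, ∑ j, (hankel n XT i j - hankel n (fun i =>
          XT i - (∏ k ∈ Finset.range K, (a k) ^ ((i : ℕ) + 1)) * X0 i) i j) * (x i * x j)|
          ≤ ∑ i, |∑ j, (hankel n XT i j - hankel n (fun i =>
          XT i - (∏ k ∈ Finset.range K, (a k) ^ ((i : ℕ) + 1)) * X0 i) i j) * (x i * x j)| :=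
            Finset.abs_sum_le_sum_abs _ _
        _ ≤ ∑ i, ∑ j, |(hankel n XT i j - hankel n (fun i =>
          XT i - (∏ k ∈ Finset.range K, (a k) ^ ((i : ℕ) + 1)) * X0 i) i j) * (x i * x j)| :=
            Finset.sum_le_sum fun i _ => Finset.abs_sum_le_sum_abs _ _
        _ ≤ ∑ i, ∑ j, (c^K*B) * (|x i| * |x j|) := by
            refine Finset.sum_le_sum fun i _ => Finset.sum_le_sum fun j _ => ?_
            rw [abs_mul, abs_mul]
            exact mul_le_mul_of_nonneg_right (hentry i j) (by positivity)
        _ = (c^K*B) * ((∑ i, |x i|) * (∑ j, |x j|)) := by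
            rw [Finset.sum_mul_sum, Finset.mul_sum]
            exact Finset.sum_congr rfl fun i _ => by rw [Finset.mul_sum]
        _ ≤ (c^K*B) * (((n:ℝ)+1) * ∑ i, x i ^ 2) := by
            refine mul_le_mul_of_nonneg_left ?_ (by positivity)
            have h2 := sq_sum_le_card_mul_sum_sq (s := Finset.univ)
              (f := fun i : Fin (n+1) => |x i|)
            simp only [Finset.card_univ, Fintype.card_fin, sq_abs] at h2
            calc (∑ i, |x i|) * (∑ j, |x j|) = (∑ i, |x i|) ^ 2 := (sq _).symm
              _ ≤ ((n+1 : ℕ) : ℝ) * ∑ i, x i ^ 2 := h2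
              _ = ((n:ℝ)+1) * ∑ i, x i ^ 2 := by push_cast; ring
    have h1 := hco x
    have hlt : (c^K*B) * (((n:ℝ)+1) * ∑ i, x i ^ 2) < ε * ∑ i, x i ^ 2 := by
      calc (c^K*B) * (((n:ℝ)+1) * ∑ i, x i ^ 2)
          = (c^K * B * ((n:ℝ)+1)) * ∑ i, x i ^ 2 := by ring
        _ < ε * ∑ i, x i ^ 2 := mul_lt_mul_of_pos_right hCK hS
    rw [hquad]
    have := le_abs_self (∑ i, ∑ j, (hankel n XT i j - hankel n (fun i =>
          XT i - (∏ k ∈ Finset.range K, (a k) ^ ((i : ℕ) + 1)) * X0 i) i j) * (x i * x j))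
    linarith
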